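/- Fix a kernel K : ℝᵈ × ℝᵈ → ℝ, data points x⁽¹⁾,…,x⁽ⁿ⁾, labels y⁽¹⁾,…,y⁽ⁿ⁾, and stepsizes r'_0,…,r'_k ∈ ℝ. Define f_0 = 0 and f_{ℓ+1}(x) = f_ℓ(x) + r'_ℓ Σᵢ (y⁽ⁱ⁾ − f_ℓ(x⁽ⁱ⁾)) K(x⁽ⁱ⁾, x). Separately, define the Transformer recursion: for each test point x, set Ỹ⁽ⁱ⁾_0 = y⁽ⁱ⁾ for i ≤ n and Ỹ⁽ⁿ⁺¹⁾_0 = 0 (with x⁽ⁿ⁺¹⁾ = x), and Ỹ⁽ʲ⁾_{ℓ+1} = Ỹ⁽ʲ⁾_ℓ − r'_ℓ Σ_{i=1}^n Ỹ⁽ⁱ⁾_ℓ K(x⁽ⁱ⁾, x⁽ʲ⁾) for all j = 1…n+1. Then for all ℓ and all x: Ỹ⁽ⁿ⁺¹⁾_ℓ = −f_ℓ(x), and Ỹ⁽ⁱ⁾_ℓ = y⁽ⁱ⁾ − f_ℓ(x⁽ⁱ⁾) for i ≤ n. -/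
import Mathlib


/-- Proposition 1, core identity: the Transformer label-row recursion exactly tracks
the residuals of kernel functional gradient descent. With `f₀ = 0`,
`f_{ℓ+1}(x) = f_ℓ(x) + r'_ℓ ∑ᵢ (yᵢ − f_ℓ(xᵢ)) K(xᵢ, x)`, and the recursion
`Ỹ⁽ʲ⁾_{ℓ+1} = Ỹ⁽ʲ⁾_ℓ − r'_ℓ ∑_{i≤n} Ỹ⁽ⁱ⁾_ℓ K(xᵢ, xⱼ)` started from
`Ỹ⁽ⁱ⁾₀ = yᵢ (i ≤ n)`, `Ỹ⁽ⁿ⁺¹⁾₀ = 0`, `x⁽ⁿ⁺¹⁾ = x`, we have for all `ℓ`: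
`Ỹ⁽ⁿ⁺¹⁾_ℓ = −f_ℓ(x)` and `Ỹ⁽ⁱ⁾_ℓ = yᵢ − f_ℓ(xᵢ)` for `i ≤ n`. -/
theorem transformer_tracks_functional_gd
    {d n : ℕ} (K : (Fin d → ℝ) → (Fin d → ℝ) → ℝ)
    (xdata : Fin n → (Fin d → ℝ)) (y : Fin n → ℝ) (r : ℕ → ℝ)
    (f : ℕ → (Fin d → ℝ) → ℝ)
    (hf0 : f 0 = 0)
    (hfrec : ∀ ℓ (x : Fin d → ℝ),
      f (ℓ + 1) x = f ℓ x + r ℓ * ∑ i, (y i - f ℓ (xdata i)) * K (xdata i) x)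
    (x : Fin d → ℝ) (x' : Fin (n + 1) → (Fin d → ℝ))
    (hx'last : x' (Fin.last n) = x)
    (hx'cast : ∀ i : Fin n, x' i.castSucc = xdata i)
    (Ytil : ℕ → Fin (n + 1) → ℝ)
    (hY0last : Ytil 0 (Fin.last n) = 0)
    (hY0cast : ∀ i : Fin n, Ytil 0 i.castSucc = y i)
    (hYrec : ∀ ℓ (j : Fin (n + 1)),
      Ytil (ℓ + 1) j = Ytil ℓ j - r ℓ * ∑ i : Fin n,
        Ytil ℓ i.castSucc * K (xdata i) (x' j)) :
    ∀ ℓ, Ytil ℓ (Fin.last n) = -(f ℓ x) ∧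
      ∀ i : Fin n, Ytil ℓ i.castSucc = y i - f ℓ (xdata i) := by
  intro ℓ
  induction ℓ with
  | zero =>
    constructor
    · simp [hY0last, hf0]
    · intro i; simp [hY0cast, hf0]
  | succ ℓ ih =>
    obtain ⟨ihlast, ihcast⟩ := ih
    have hsum : ∀ z : Fin d → ℝ,
        (∑ i : Fin n, Ytil ℓ i.castSucc * K (xdata i) z)
          = ∑ i, (y i - f ℓ (xdata i)) * K (xdata i) z := by
      intro z; exact Finset.sum_congr rfl fun i _ => by rw [ihcast i]
    constructor
    · rw [hYrec, hx'last, hsum, ihlast, hfrec]; ring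
    · intro i
      rw [hYrec, hx'cast, hsum, ihcast i, hfrec]; ring
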